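/- There do not exist three consecutive values of p: there is no positive integer m such that m, m+1 and m+2 all lie in the range of p (i.e., all three are equal to p(k) for some k ≥ 1). -/
import Mathlib


/-- Wythoff sequences: `p 1 = 1`, `q n = p n + n` for `n ≥ 1`, and `p (n+1)` is the
smallest positive integer not contained in `U_n = {p 1, …, p n, q 1, …, q n}`. -/

theorem stmt_5 (p q : ℕ → ℕ)
    (hp1 : p 1 = 1)
    (hq : ∀ n, 1 ≤ n → q n = p n + n)
    (hmin : ∀ n, 1 ≤ n →
      IsLeast {m : ℕ | 0 < m ∧ ∀ i, 1 ≤ i → i ≤ n → m ≠ p i ∧ m ≠ q i} (p (n + 1))) :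
    ¬ ∃ m : ℕ, 0 < m ∧ (∃ k, 1 ≤ k ∧ p k = m) ∧ (∃ k, 1 ≤ k ∧ p k = m + 1) ∧
      (∃ k, 1 ≤ k ∧ p k = m + 2) := by
  -- p is strictly increasing
  have hstep : ∀ n, 1 ≤ n → p n < p (n + 1) := by
    intro n hn
    obtain ⟨⟨hpos, hne⟩, -⟩ := hmin n hn
    have hnen : p (n + 1) ≠ p n := (hne n hn le_rfl).1
    rcases eq_or_lt_of_le hn with h1 | h2
    · cases h1
      rw [hp1] at hnen ⊢
      omega
    · have hn1 : 1 ≤ n - 1 := by omega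
      have hmem : p (n + 1) ∈ {m : ℕ | 0 < m ∧ ∀ i, 1 ≤ i → i ≤ n - 1 → m ≠ p i ∧ m ≠ q i} :=
        ⟨hpos, fun i hi1 hik => hne i hi1 (by omega)⟩
      have hle := (hmin (n - 1) hn1).2 hmem
      have hkk : n - 1 + 1 = n := by omega
      rw [hkk] at hle
      exact lt_of_le_of_ne hle (Ne.symm hnen)
  have hmono : ∀ a, 1 ≤ a → ∀ b, a ≤ b → p a + (b - a) ≤ p b := by
    intro a ha b hb
    induction b, hb using Nat.le_induction with
    | base => simp
    | succ b hb ih =>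
      have := hstep b (ha.trans hb)
      omega
  have hpge : ∀ b, 1 ≤ b → b ≤ p b := by
    intro b hb
    have := hmono 1 le_rfl b hb
    omega
  -- q increases with gaps ≥ 2
  have hqmono : ∀ a b, 1 ≤ a → a < b → q a + 2 ≤ q b := by
    intro a b ha hab
    have h1 := hmono a ha b (le_of_lt hab)
    rw [hq a ha, hq b (by omega)]
    omega
  -- gaps of p are at most 2
  have hgap : ∀ n, 1 ≤ n → p (n + 1) ≤ p n + 2 := by
    intro n hn
    by_cases hex : ∃ j, 1 ≤ j ∧ j ≤ n ∧ q j = p n + 1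
    · obtain ⟨j, hj1, hjn, hqj⟩ := hex
      have hmem : p n + 2 ∈ {m : ℕ | 0 < m ∧ ∀ i, 1 ≤ i → i ≤ n → m ≠ p i ∧ m ≠ q i} := by
        refine ⟨by omega, fun i hi1 hin => ⟨?_, ?_⟩⟩
        · have := hmono i hi1 n hin
          omega
        · intro hcon
          rcases lt_trichotomy i j with h | rfl | h
          · have := hqmono i j hi1 h; omega
          · omega
          · have := hqmono j i hj1 h; omega
      exact (hmin n hn).2 hmem
    · push_neg at hex
      have hmem : p n + 1 ∈ {m : ℕ | 0 < m ∧ ∀ i, 1 ≤ i → i ≤ n → m ≠ p i ∧ m ≠ q i} := by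
        refine ⟨by omega, fun i hi1 hin => ⟨?_, ?_⟩⟩
        · have := hmono i hi1 n hin
          omega
        · intro hcon
          exact hex i hi1 hin hcon.symm
      have := (hmin n hn).2 hmem
      omega
  -- p-values and q-values are disjoint
  have hdisj : ∀ k i, 1 ≤ k → 1 ≤ i → p k ≠ q i := by
    intro k i hk hi
    rcases le_or_gt k i with h | h
    · have := hmono k hk i h
      rw [hq i hi]
      omega
    · have hk1 : 1 ≤ k - 1 := by omega
      obtain ⟨⟨-, hne⟩, -⟩ := hmin (k - 1) hk1
      have hne2 := (hne i hi (by omega)).2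
      have hkk : k - 1 + 1 = k := by omega
      rw [hkk] at hne2
      exact hne2
  -- every positive integer is a p-value or a q-value
  have hcompl : ∀ m, 1 ≤ m → (∃ i, 1 ≤ i ∧ p i = m) ∨ (∃ i, 1 ≤ i ∧ q i = m) := by
    intro m hm
    by_contra hcon
    push_neg at hcon
    obtain ⟨h1, h2⟩ := hcon
    have hmem : m ∈ {x : ℕ | 0 < x ∧ ∀ i, 1 ≤ i → i ≤ m → x ≠ p i ∧ x ≠ q i} :=
      ⟨hm, fun i hi _ => ⟨fun h => h1 i hi h.symm, fun h => h2 i hi h.symm⟩⟩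
    have hle := (hmin m hm).2 hmem
    have := hpge (m + 1) (by omega)
    omega
  -- the Wythoff identity: p (p n) + 1 = q n
  have hL6 : ∀ n, 1 ≤ n → p (p n) + 1 = q n := by
    intro n hn
    induction n, hn using Nat.le_induction with
    | base => rw [hp1, hp1, hq 1 le_rfl, hp1]
    | succ n hn ih =>
      have hk1 : 1 ≤ p n := le_trans hn (hpge n hn)
      -- the gap of p at index (p n) is exactly 2
      have hne : p (p n + 1) ≠ p (p n) + 1 := by
        intro h
        exact hdisj (p n + 1) n (by omega) hn (h.trans ih)
      have hstep1 := hstep (p n) hk1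
      have hgap1 := hgap (p n) hk1
      have hk2 : p (p n + 1) = p (p n) + 2 := by omega
      have hg := hstep n hn
      have hg2 := hgap n hn
      have hqn1 : q (n + 1) = p (n + 1) + (n + 1) := hq (n + 1) (by omega)
      have hqn : q n = p n + n := hq n hn
      rcases (by omega : p (n + 1) = p n + 1 ∨ p (n + 1) = p n + 2) with h1 | h2
      · rw [h1, hk2]
        omega
      · -- need p (p n + 2) = p (p n) + 3
        have hnotB : ∀ i, 1 ≤ i → q i ≠ p (p n) + 3 := by
          intro i hi hqi
          have hcase : i < n ∨ i = n ∨ i = n + 1 ∨ n + 2 ≤ i := by omega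
          rcases hcase with h | rfl | rfl | h
          · have := hqmono i n hi h; omega
          · omega
          · omega
          · have := hqmono (n + 1) i (by omega) (by omega)
            omega
        rcases hcompl (p (p n) + 3) (by omega) with ⟨r, hr1, hpr⟩ | ⟨i, hi1, hqi⟩
        · have hr : p n + 2 ≤ r := by
            by_contra hcon
            have := hmono r hr1 (p n + 1) (by omega)
            omega
          have h5 := hmono (p n + 2) (by omega) r hr
          have h6 : p (p n + 1) < p (p n + 2) := hstep (p n + 1) (by omega)
          have hval : p (p n + 2) = p (p n) + 3 := by omega
          rw [h2, hval]
          omega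
        · exact absurd hqi (hnotB i hi1)
  -- a gap of 1 at index k forces k to be a q-value
  have hBof : ∀ k, 1 ≤ k → p (k + 1) = p k + 1 → ∃ s, 1 ≤ s ∧ q s = k := by
    intro k hk hgap1
    rcases hcompl k hk with ⟨s, hs1, hps⟩ | hB
    · exfalso
      have h6 := hL6 s hs1
      rw [hps] at h6
      exact hdisj (k + 1) s (by omega) hs1 (hgap1.trans h6)
    · exact hB
  -- main argument
  rintro ⟨m, hm, ⟨a, ha1, hpa⟩, ⟨b, hb1, hpb⟩, ⟨c, hc1, hpc⟩⟩
  have hab : a < b := by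
    by_contra hcon
    have := hmono b hb1 a (by omega)
    omega
  have hb : b = a + 1 := by
    by_contra hcon
    have h1 := hmono (a + 1) (by omega) b (by omega)
    have h2 := hstep a ha1
    omega
  have hbc : b < c := by
    by_contra hcon
    have := hmono c hc1 b (by omega)
    omega
  have hc : c = a + 2 := by
    by_contra hcon
    have h1 := hmono (a + 2) (by omega) c (by omega)
    have h2 : p (a + 1) < p (a + 2) := hstep (a + 1) (by omega)
    rw [hb] at hpb
    omega
  rw [hb] at hpb
  rw [hc] at hpc
  obtain ⟨s, hs1, hqs⟩ := hBof a ha1 (by omega)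
  obtain ⟨t, ht1, hqt⟩ := hBof (a + 1) (by omega) (by show p (a + 2) = p (a + 1) + 1; omega)
  rcases lt_trichotomy s t with h | rfl | h
  · have := hqmono s t hs1 h; omega
  · omega
  · have := hqmono t s ht1 h; omega
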